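/- Let F be a field of characteristic ≠ 2 and let θ(X) = pf(J X) on so(2m,F). With the block embedding ψ : so(2a,F) ⊕ so(2b,F) → so(2a+2b,F) as above, θ(ψ(A,B)) = (−1)^{ab} · θ(A) · θ(B). -/

import Mathlib

open Matrix

/-- The even orthogonal form matrix `J_{2m}` (Waldspurger's normalization), with
(1-based) entries `(−1)^{i+1}/2` if `i+j = 2m+1`, `i < j`; `(−1)^{j+1}/2` if
`i+j = 2m+1`, `j < i`; and `0` otherwise. -/
def Jmat (F : Type*) [Field F] (m : ℕ) : Matrix (Fin (2 * m)) (Fin (2 * m)) F :=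
  Matrix.of fun i j =>
    if (i : ℕ) + (j : ℕ) = 2 * m - 1 then
      (if (i : ℕ) < (j : ℕ) then (-1 : F) ^ (i : ℕ) / 2 else (-1 : F) ^ (j : ℕ) / 2)
    else 0

/-- The block embedding `ψ : so(2a) ⊕ so(2b) → so(2a+2b)` placing `A` in the middle
`2a × 2a` block and the four `b × b` blocks of `B` at the corners. -/
def psi {F : Type*} [Field F] (a b : ℕ)
    (A : Matrix (Fin (2 * a)) (Fin (2 * a)) F)
    (B : Matrix (Fin (2 * b)) (Fin (2 * b)) F) :
    Matrix (Fin (2 * a + 2 * b)) (Fin (2 * a + 2 * b)) F :=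
  Matrix.of fun i j =>
    if hi : b ≤ (i : ℕ) ∧ (i : ℕ) < b + 2 * a then
      if hj : b ≤ (j : ℕ) ∧ (j : ℕ) < b + 2 * a then
        A ⟨(i : ℕ) - b, by omega⟩ ⟨(j : ℕ) - b, by omega⟩
      else 0
    else
      if hj : b ≤ (j : ℕ) ∧ (j : ℕ) < b + 2 * a then 0
      else
        B ⟨if (i : ℕ) < b then (i : ℕ) else (i : ℕ) - 2 * a,
            by have := i.isLt; split_ifs <;> omega⟩
          ⟨if (j : ℕ) < b then (j : ℕ) else (j : ℕ) - 2 * a,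
            by have := j.isLt; split_ifs <;> omega⟩


/-- The index `2*i + k` in `Fin (2*n)`. -/
def pairIdx (n : ℕ) (i : Fin n) (k : Fin 2) : Fin (2 * n) :=
  ⟨2 * i.val + k.val, by omega⟩

/-- The Pfaffian of a (skew-symmetric) `2n × 2n` matrix, defined as the sum over
perfect matchings of signed products of entries.  It satisfies `pf M ^ 2 = det M`
and `pf J = 1` for the standard symplectic matrix `J`. -/
noncomputable def pf {R : Type*} [CommRing R] {n : ℕ}
    (A : Matrix (Fin (2 * n)) (Fin (2 * n)) R) : R :=
  ∑ σ ∈ Finset.univ.filter (fun σ : Equiv.Perm (Fin (2 * n)) =>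
      (∀ i : Fin n, (σ (pairIdx n i 0)).val < (σ (pairIdx n i 1)).val) ∧
      (∀ i j : Fin n, i < j → (σ (pairIdx n i 0)).val < (σ (pairIdx n j 0)).val)),
    (Equiv.Perm.sign σ : ℤ) • ∏ i : Fin n, A (σ (pairIdx n i 0)) (σ (pairIdx n i 1))

namespace PfProof
open Equiv Equiv.Perm Finset

lemma pairIdx_inj {n : ℕ} {i j : Fin n} {k l : Fin 2} (h : pairIdx n i k = pairIdx n j l) :
    i = j ∧ k = l := by
  have hv := congrArg Fin.val h
  simp only [pairIdx] at hv
  have hk := k.isLt; have hl := l.isLt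
  constructor <;> apply Fin.ext <;> omega

section basic
variable {R : Type*} [CommRing R] {n : ℕ}

def pairSwap (n : ℕ) : Equiv.Perm (Fin (2 * n)) :=
  Function.Involutive.toPerm
    (fun x => ⟨if x.val % 2 = 0 then x.val + 1 else x.val - 1, by have := x.isLt; split <;> omega⟩)
    (by intro x; apply Fin.ext; simp only []; have := x.isLt; split <;> split <;> omega)

lemma pairSwap_val (x : Fin (2 * n)) :
    (pairSwap n x).val = if x.val % 2 = 0 then x.val + 1 else x.val - 1 := rfl

lemma pairSwap_pair0 (i : Fin n) : pairSwap n (pairIdx n i 0) = pairIdx n i 1 := by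
  apply Fin.ext; rw [pairSwap_val]; simp [pairIdx]

lemma pairSwap_pair1 (i : Fin n) : pairSwap n (pairIdx n i 1) = pairIdx n i 0 := by
  apply Fin.ext; rw [pairSwap_val]; simp [pairIdx]

def pfSet (n : ℕ) : Finset (Equiv.Perm (Fin (2 * n))) :=
  Finset.univ.filter (fun σ : Equiv.Perm (Fin (2 * n)) =>
      (∀ i : Fin n, (σ (pairIdx n i 0)).val < (σ (pairIdx n i 1)).val) ∧
      (∀ i j : Fin n, i < j → (σ (pairIdx n i 0)).val < (σ (pairIdx n j 0)).val))

noncomputable def pfTerm (M : Matrix (Fin (2 * n)) (Fin (2 * n)) R) (σ : Equiv.Perm (Fin (2 * n))) : R :=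
  ((Equiv.Perm.sign σ : ℤ) : R) * ∏ i : Fin n, M (σ (pairIdx n i 0)) (σ (pairIdx n i 1))

lemma pf_eq (M : Matrix (Fin (2 * n)) (Fin (2 * n)) R) :
    pf M = ∑ σ ∈ pfSet n, pfTerm M σ := by
  unfold pf pfSet pfTerm
  refine Finset.sum_congr rfl fun σ _ => ?_
  rw [zsmul_eq_mul]

lemma pfTerm_mul_swap (M : Matrix (Fin (2 * n)) (Fin (2 * n)) R)
    (hM : ∀ i j, M j i = - M i j) (σ : Equiv.Perm (Fin (2 * n))) (i : Fin n) :
    pfTerm M (σ * Equiv.swap (pairIdx n i 0) (pairIdx n i 1)) = pfTerm M σ := by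
  have hne : pairIdx n i 0 ≠ pairIdx n i 1 := by
    intro h
    have := (pairIdx_inj h).2
    exact absurd this (by decide)
  unfold pfTerm
  rw [_root_.map_mul, Equiv.Perm.sign_swap hne]
  have hprod : (∏ j : Fin n,
      M ((σ * Equiv.swap (pairIdx n i 0) (pairIdx n i 1)) (pairIdx n j 0))
        ((σ * Equiv.swap (pairIdx n i 0) (pairIdx n i 1)) (pairIdx n j 1)))
      = - ∏ j : Fin n, M (σ (pairIdx n j 0)) (σ (pairIdx n j 1)) := by
    have key : ∀ j : Fin n,
        M ((σ * Equiv.swap (pairIdx n i 0) (pairIdx n i 1)) (pairIdx n j 0))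
          ((σ * Equiv.swap (pairIdx n i 0) (pairIdx n i 1)) (pairIdx n j 1))
        = Function.update (fun j : Fin n => M (σ (pairIdx n j 0)) (σ (pairIdx n j 1))) i
            (- M (σ (pairIdx n i 0)) (σ (pairIdx n i 1))) j := by
      intro j
      by_cases hj : j = i
      · subst hj
        rw [Function.update_self]
        simp only [Equiv.Perm.mul_apply, Equiv.swap_apply_left, Equiv.swap_apply_right]
        exact hM _ _
      · rw [Function.update_of_ne hj]
        have h0 : Equiv.swap (pairIdx n i 0) (pairIdx n i 1) (pairIdx n j 0) = pairIdx n j 0 := by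
          apply Equiv.swap_apply_of_ne_of_ne <;> intro h <;> exact hj (pairIdx_inj h).1
        have h1 : Equiv.swap (pairIdx n i 0) (pairIdx n i 1) (pairIdx n j 1) = pairIdx n j 1 := by
          apply Equiv.swap_apply_of_ne_of_ne <;> intro h <;> exact hj (pairIdx_inj h).1
        simp [Equiv.Perm.mul_apply, h0, h1]
    rw [Finset.prod_congr rfl (fun j _ => key j),
        Finset.prod_update_of_mem (Finset.mem_univ i),
        Finset.sdiff_singleton_eq_erase, neg_mul]
    congr 1
    exact Finset.mul_prod_erase Finset.univ
      (fun j : Fin n => M (σ (pairIdx n j 0)) (σ (pairIdx n j 1))) (Finset.mem_univ i)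
  rw [hprod]
  push_cast
  ring

end basic
end PfProof

namespace PfProof
open Equiv Equiv.Perm Finset

def pairEquiv (n : ℕ) : Fin n × Fin 2 ≃ Fin (2 * n) where
  toFun p := pairIdx n p.1 p.2
  invFun x := (⟨x.val / 2, by have := x.isLt; omega⟩, ⟨x.val % 2, by omega⟩)
  left_inv := by
    rintro ⟨i, k⟩
    have hk := k.isLt
    refine Prod.ext ?_ ?_ <;> apply Fin.ext <;> simp [pairIdx] <;> omega
  right_inv := by
    intro x
    apply Fin.ext
    simp [pairIdx]
    omega

lemma pairEquiv_apply (n : ℕ) (i : Fin n) (k : Fin 2) : pairEquiv n (i, k) = pairIdx n i k := rfl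

lemma exists_pairIdx {n : ℕ} (x : Fin (2 * n)) : ∃ i k, x = pairIdx n i k := by
  obtain ⟨⟨i, k⟩, rfl⟩ := (pairEquiv n).surjective x
  exact ⟨i, k, rfl⟩

section pairperm
variable {R : Type*} [CommRing R] {n : ℕ}

def pairPerm (π : Equiv.Perm (Fin n)) : Equiv.Perm (Fin (2 * n)) :=
  (pairEquiv n).permCongr (Equiv.prodCongr π (Equiv.refl (Fin 2)))

lemma pairPerm_apply (π : Equiv.Perm (Fin n)) (i : Fin n) (k : Fin 2) :
    pairPerm π (pairIdx n i k) = pairIdx n (π i) k := by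
  unfold pairPerm
  rw [Equiv.permCongr_apply, ← pairEquiv_apply, Equiv.symm_apply_apply]
  rfl

lemma pairPerm_mul (π ρ : Equiv.Perm (Fin n)) :
    pairPerm (π * ρ) = pairPerm π * pairPerm ρ := by
  apply Equiv.ext
  intro x
  obtain ⟨i, k, rfl⟩ := exists_pairIdx x
  simp [Equiv.Perm.mul_apply, pairPerm_apply]

lemma pairPerm_one : pairPerm (1 : Equiv.Perm (Fin n)) = 1 := by
  apply Equiv.ext
  intro x
  obtain ⟨i, k, rfl⟩ := exists_pairIdx x
  simp [pairPerm_apply]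

lemma pairPerm_swap {x y : Fin n} (hxy : x ≠ y) :
    pairPerm (Equiv.swap x y) =
      Equiv.swap (pairIdx n x 0) (pairIdx n y 0) * Equiv.swap (pairIdx n x 1) (pairIdx n y 1) := by
  apply Equiv.ext
  intro z
  obtain ⟨i, k, rfl⟩ := exists_pairIdx z
  rw [pairPerm_apply, Equiv.Perm.mul_apply]
  have hk2 := k.isLt
  by_cases hk : k = 0
  · subst hk
    have h1 : Equiv.swap (pairIdx n x 1) (pairIdx n y 1) (pairIdx n i 0) = pairIdx n i 0 := by
      apply Equiv.swap_apply_of_ne_of_ne <;> intro h <;>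
        exact absurd (pairIdx_inj h).2 (by decide)
    rw [h1]
    by_cases hix : i = x
    · subst hix; rw [Equiv.swap_apply_left, Equiv.swap_apply_left]
    · by_cases hiy : i = y
      · subst hiy; rw [Equiv.swap_apply_right, Equiv.swap_apply_right]
      · rw [Equiv.swap_apply_of_ne_of_ne hix hiy,
            Equiv.swap_apply_of_ne_of_ne (fun h => hix (pairIdx_inj h).1)
              (fun h => hiy (pairIdx_inj h).1)]
  · have hk1 : k = 1 := by
      apply Fin.ext; have := Fin.val_ne_of_ne hk; omega
    subst hk1
    have h1 : Equiv.swap (pairIdx n x 0) (pairIdx n y 0)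
        (Equiv.swap (pairIdx n x 1) (pairIdx n y 1) (pairIdx n i 1))
        = Equiv.swap (pairIdx n x 1) (pairIdx n y 1) (pairIdx n i 1) := by
      apply Equiv.swap_apply_of_ne_of_ne <;>
        · obtain ⟨j, hj⟩ : ∃ j, Equiv.swap (pairIdx n x 1) (pairIdx n y 1) (pairIdx n i 1) = pairIdx n j 1 := by
            by_cases hix : i = x
            · subst hix; exact ⟨y, by rw [Equiv.swap_apply_left]⟩
            · by_cases hiy : i = y
              · subst hiy; exact ⟨x, by rw [Equiv.swap_apply_right]⟩
              · exact ⟨i, Equiv.swap_apply_of_ne_of_ne (fun h => hix (pairIdx_inj h).1)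
                  (fun h => hiy (pairIdx_inj h).1)⟩
          rw [hj]; intro h; exact absurd (pairIdx_inj h).2 (by decide)
    rw [h1]
    by_cases hix : i = x
    · subst hix; rw [Equiv.swap_apply_left, Equiv.swap_apply_left]
    · by_cases hiy : i = y
      · subst hiy; rw [Equiv.swap_apply_right, Equiv.swap_apply_right]
      · rw [Equiv.swap_apply_of_ne_of_ne hix hiy,
            Equiv.swap_apply_of_ne_of_ne (fun h => hix (pairIdx_inj h).1)
              (fun h => hiy (pairIdx_inj h).1)]

lemma sign_pairPerm (π : Equiv.Perm (Fin n)) : Equiv.Perm.sign (pairPerm π) = 1 := by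
  refine Equiv.Perm.swap_induction_on π ?_ ?_
  · rw [pairPerm_one, _root_.map_one]
  · intro f x y hxy ih
    rw [pairPerm_mul, _root_.map_mul, ih, pairPerm_swap hxy, _root_.map_mul,
      Equiv.Perm.sign_swap (fun h => hxy (pairIdx_inj h).1),
      Equiv.Perm.sign_swap (fun h => hxy (pairIdx_inj h).1)]
    simp

lemma pfTerm_mul_pairPerm (M : Matrix (Fin (2 * n)) (Fin (2 * n)) R)
    (σ : Equiv.Perm (Fin (2 * n))) (π : Equiv.Perm (Fin n)) :
    pfTerm M (σ * pairPerm π) = pfTerm M σ := by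
  unfold pfTerm
  rw [_root_.map_mul, sign_pairPerm, mul_one]
  congr 1
  calc ∏ i : Fin n, M ((σ * pairPerm π) (pairIdx n i 0)) ((σ * pairPerm π) (pairIdx n i 1))
      = ∏ i : Fin n, M (σ (pairIdx n (π i) 0)) (σ (pairIdx n (π i) 1)) := by
        refine Finset.prod_congr rfl fun i _ => ?_
        rw [Equiv.Perm.mul_apply, Equiv.Perm.mul_apply, pairPerm_apply, pairPerm_apply]
    _ = ∏ i : Fin n, M (σ (pairIdx n i 0)) (σ (pairIdx n i 1)) :=
        Equiv.prod_comp π (fun i => M (σ (pairIdx n i 0)) (σ (pairIdx n i 1)))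

end pairperm
end PfProof

namespace PfProof
open Equiv Equiv.Perm Finset

lemma pairIdx_val (n : ℕ) (i : Fin n) (k : Fin 2) : (pairIdx n i k).val = 2 * i.val + k.val := rfl

section engine
variable {R : Type*} [CommRing R] {n : ℕ}

lemma fin2_cases (k : Fin 2) : k = 0 ∨ k = 1 := by revert k; decide

lemma pairSwap_comm_swap (i : Fin n) :
    Equiv.swap (pairIdx n i 0) (pairIdx n i 1) * pairSwap n
      = pairSwap n * Equiv.swap (pairIdx n i 0) (pairIdx n i 1) := by
  apply Equiv.ext
  intro z
  obtain ⟨j, k, rfl⟩ := exists_pairIdx z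
  rcases fin2_cases k with rfl | rfl
  · rw [Equiv.Perm.mul_apply, Equiv.Perm.mul_apply, pairSwap_pair0]
    by_cases hj : j = i
    · subst hj
      rw [Equiv.swap_apply_right, Equiv.swap_apply_left, pairSwap_pair1]
    · rw [Equiv.swap_apply_of_ne_of_ne (fun h => hj (pairIdx_inj h).1)
        (fun h => hj (pairIdx_inj h).1),
        Equiv.swap_apply_of_ne_of_ne (fun h => hj (pairIdx_inj h).1)
        (fun h => hj (pairIdx_inj h).1), pairSwap_pair0]
  · rw [Equiv.Perm.mul_apply, Equiv.Perm.mul_apply, pairSwap_pair1]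
    by_cases hj : j = i
    · subst hj
      rw [Equiv.swap_apply_left, Equiv.swap_apply_right, pairSwap_pair0]
    · rw [Equiv.swap_apply_of_ne_of_ne (fun h => hj (pairIdx_inj h).1)
        (fun h => hj (pairIdx_inj h).1),
        Equiv.swap_apply_of_ne_of_ne (fun h => hj (pairIdx_inj h).1)
        (fun h => hj (pairIdx_inj h).1), pairSwap_pair1]

lemma pfTerm_mul_comm_aux (M : Matrix (Fin (2 * n)) (Fin (2 * n)) R)
    (hM : ∀ i j, M j i = - M i j) :
    ∀ (c : ℕ) (h : Equiv.Perm (Fin (2 * n))),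
      (Finset.univ.filter (fun i : Fin n => (h (pairIdx n i 0)).val % 2 = 1)).card = c →
      h * pairSwap n = pairSwap n * h →
      ∀ σ, pfTerm M (σ * h) = pfTerm M σ := by
  intro c
  induction c using Nat.strong_induction_on with
  | _ c ih =>
  intro h hcard hcomm σ
  have hcommApp : ∀ x, h (pairSwap n x) = pairSwap n (h x) := by
    intro x
    have := Equiv.ext_iff.mp hcomm x
    simpa [Equiv.Perm.mul_apply] using this
  rcases Nat.eq_zero_or_pos c with hc | hc
  · -- no flips
    subst hc
    have hall : ∀ i : Fin n, (h (pairIdx n i 0)).val % 2 = 0 := by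
      intro i
      have hemp := Finset.card_eq_zero.mp hcard
      by_contra hodd
      have : i ∈ Finset.univ.filter (fun i : Fin n => (h (pairIdx n i 0)).val % 2 = 1) := by
        simp only [Finset.mem_filter, Finset.mem_univ, true_and]
        omega
      rw [hemp] at this
      exact absurd this (Finset.notMem_empty i)
    have hlt : ∀ i : Fin n, (h (pairIdx n i 0)).val / 2 < n := by
      intro i; have := (h (pairIdx n i 0)).isLt; omega
    have hinj : Function.Injective (fun i : Fin n => (⟨(h (pairIdx n i 0)).val / 2, hlt i⟩ : Fin n)) := by
      intro i j hij
      have hij' : (h (pairIdx n i 0)).val / 2 = (h (pairIdx n j 0)).val / 2 := congrArg Fin.val hij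
      have : h (pairIdx n i 0) = h (pairIdx n j 0) := by
        apply Fin.ext
        have h1 := hall i; have h2 := hall j
        omega
      exact (pairIdx_inj (h.injective this)).1
    let π : Equiv.Perm (Fin n) :=
      Equiv.ofBijective _ ((Finite.injective_iff_bijective).mp hinj)
    have hπ : ∀ i, π i = (⟨(h (pairIdx n i 0)).val / 2, hlt i⟩ : Fin n) := fun i => rfl
    have e2 : ∀ i : Fin n, h (pairIdx n i 0)
        = pairIdx n (⟨(h (pairIdx n i 0)).val / 2, hlt i⟩ : Fin n) 0 := by
      intro i
      apply Fin.ext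
      show (h (pairIdx n i 0)).val = 2 * ((h (pairIdx n i 0)).val / 2) + ((0 : Fin 2) : ℕ)
      have h0 : ((0 : Fin 2) : ℕ) = 0 := rfl
      have := hall i
      omega
    have hh : h = pairPerm π := by
      apply Equiv.ext
      intro z
      obtain ⟨i, k, rfl⟩ := exists_pairIdx z
      rcases fin2_cases k with rfl | rfl
      · rw [pairPerm_apply, hπ]
        exact e2 i
      · have e1 : h (pairIdx n i 1) = pairSwap n (h (pairIdx n i 0)) := by
          rw [← pairSwap_pair0 i, hcommApp]
        rw [pairPerm_apply, hπ, e1]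
        conv_lhs => rw [e2 i]
        rw [pairSwap_pair0]
    rw [hh]
    exact pfTerm_mul_pairPerm M σ π
  · -- strip one flip
    obtain ⟨i, hi⟩ := Finset.card_pos.mp (hcard ▸ hc)
    have hiodd : (h (pairIdx n i 0)).val % 2 = 1 := (Finset.mem_filter.mp hi).2
    have hcomm' : (h * Equiv.swap (pairIdx n i 0) (pairIdx n i 1)) * pairSwap n
        = pairSwap n * (h * Equiv.swap (pairIdx n i 0) (pairIdx n i 1)) := by
      calc (h * Equiv.swap (pairIdx n i 0) (pairIdx n i 1)) * pairSwap n
          = h * (Equiv.swap (pairIdx n i 0) (pairIdx n i 1) * pairSwap n) := by rw [mul_assoc]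
        _ = h * (pairSwap n * Equiv.swap (pairIdx n i 0) (pairIdx n i 1)) := by
            rw [pairSwap_comm_swap]
        _ = (h * pairSwap n) * Equiv.swap (pairIdx n i 0) (pairIdx n i 1) := by rw [mul_assoc]
        _ = (pairSwap n * h) * Equiv.swap (pairIdx n i 0) (pairIdx n i 1) := by rw [hcomm]
        _ = pairSwap n * (h * Equiv.swap (pairIdx n i 0) (pairIdx n i 1)) := by rw [mul_assoc]
    have hE : (Finset.univ.filter (fun j : Fin n =>
          ((h * Equiv.swap (pairIdx n i 0) (pairIdx n i 1)) (pairIdx n j 0)).val % 2 = 1))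
        = (Finset.univ.filter (fun j : Fin n => (h (pairIdx n j 0)).val % 2 = 1)).erase i := by
      ext j
      simp only [Finset.mem_filter, Finset.mem_univ, true_and, Finset.mem_erase]
      by_cases hj : j = i
      · subst hj
        have hv : ((h * Equiv.swap (pairIdx n j 0) (pairIdx n j 1)) (pairIdx n j 0)).val
            = (h (pairIdx n j 0)).val - 1 := by
          rw [Equiv.Perm.mul_apply, Equiv.swap_apply_left, ← pairSwap_pair0 j, hcommApp,
            pairSwap_val, if_neg (by omega)]
        rw [hv]
        constructor
        · intro hcon; omega
        · rintro ⟨hne, _⟩; exact absurd rfl hne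
      · have hv : (h * Equiv.swap (pairIdx n i 0) (pairIdx n i 1)) (pairIdx n j 0)
            = h (pairIdx n j 0) := by
          rw [Equiv.Perm.mul_apply,
            Equiv.swap_apply_of_ne_of_ne (fun hh => hj (pairIdx_inj hh).1)
              (fun hh => hj (pairIdx_inj hh).1)]
        rw [hv]
        constructor
        · intro hx; exact ⟨hj, hx⟩
        · rintro ⟨_, hx⟩; exact hx
    have hcard' : (Finset.univ.filter (fun j : Fin n =>
        ((h * Equiv.swap (pairIdx n i 0) (pairIdx n i 1)) (pairIdx n j 0)).val % 2 = 1)).card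
        = c - 1 := by
      rw [hE, Finset.card_erase_of_mem hi, hcard]
    have hdecomp : σ * h = (σ * (h * Equiv.swap (pairIdx n i 0) (pairIdx n i 1)))
        * Equiv.swap (pairIdx n i 0) (pairIdx n i 1) := by
      rw [mul_assoc, mul_assoc, Equiv.swap_mul_self, mul_one]
    rw [hdecomp, pfTerm_mul_swap M hM _ i]
    exact ih (c - 1) (by omega) _ hcard' hcomm' σ

end engine
end PfProof

namespace PfProof
open Equiv Equiv.Perm Finset

section canonical
variable {n : ℕ}

lemma fin2_val0 : ((0 : Fin 2) : ℕ) = 0 := rfl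
lemma fin2_val1 : ((1 : Fin 2) : ℕ) = 1 := rfl

lemma pairSwap_invol (x : Fin (2 * n)) : pairSwap n (pairSwap n x) = x := by
  apply Fin.ext
  rw [pairSwap_val, pairSwap_val]
  have := x.isLt
  split <;> split <;> omega

def minsSet (μ : Equiv.Perm (Fin (2 * n))) : Finset (Fin (2 * n)) :=
  Finset.univ.filter (fun x => x.val < (μ x).val)

lemma minsSet_card (μ : Equiv.Perm (Fin (2 * n))) (hinv : ∀ x, μ (μ x) = x)
    (hfpf : ∀ x, μ x ≠ x) : (minsSet μ).card = n := by
  have himg : (minsSet μ)ᶜ = (minsSet μ).image μ := by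
    ext x
    simp only [minsSet, Finset.mem_compl, Finset.mem_filter, Finset.mem_univ, true_and,
      Finset.mem_image, not_lt]
    constructor
    · intro hx
      refine ⟨μ x, ?_, hinv x⟩
      have hne : (μ x).val ≠ x.val := fun hh => hfpf x (Fin.ext hh)
      rw [hinv x]
      omega
    · rintro ⟨y, hy, rfl⟩
      rw [hinv y]
      omega
  have hcc := Finset.card_add_card_compl (minsSet μ)
  rw [himg, Finset.card_image_of_injective _ μ.injective, Fintype.card_fin] at hcc
  omega

lemma not_mem_minsSet (μ : Equiv.Perm (Fin (2 * n))) (hinv : ∀ x, μ (μ x) = x)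
    {x : Fin (2 * n)} (hx : x ∈ minsSet μ) : μ x ∉ minsSet μ := by
  simp only [minsSet, Finset.mem_filter, Finset.mem_univ, true_and] at hx ⊢
  rw [hinv x]
  omega

def cFun (μ : Equiv.Perm (Fin (2 * n))) (hc : (minsSet μ).card = n) :
    Fin (2 * n) → Fin (2 * n) :=
  fun x => if x.val % 2 = 0 then
      (minsSet μ).orderEmbOfFin hc ⟨x.val / 2, by have := x.isLt; omega⟩
    else μ ((minsSet μ).orderEmbOfFin hc ⟨x.val / 2, by have := x.isLt; omega⟩)

lemma cFun_injective (μ : Equiv.Perm (Fin (2 * n))) (hc : (minsSet μ).card = n)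
    (hinv : ∀ x, μ (μ x) = x) : Function.Injective (cFun μ hc) := by
  have hmem : ∀ z : Fin n, (minsSet μ).orderEmbOfFin hc z ∈ minsSet μ :=
    fun z => Finset.orderEmbOfFin_mem _ hc z
  have hembinj : Function.Injective ((minsSet μ).orderEmbOfFin hc) :=
    ((minsSet μ).orderEmbOfFin hc).injective
  intro x y hxy
  unfold cFun at hxy
  by_cases hx : x.val % 2 = 0 <;> by_cases hy : y.val % 2 = 0
  · rw [if_pos hx, if_pos hy] at hxy
    have := congrArg Fin.val (hembinj hxy)
    apply Fin.ext
    simp only at this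
    omega
  · rw [if_pos hx, if_neg hy] at hxy
    exact absurd (hxy ▸ hmem _) (not_mem_minsSet μ hinv (hmem _))
  · rw [if_neg hx, if_pos hy] at hxy
    exact absurd (hxy.symm ▸ hmem _) (not_mem_minsSet μ hinv (hmem _))
  · rw [if_neg hx, if_neg hy] at hxy
    have := congrArg Fin.val (hembinj (μ.injective hxy))
    apply Fin.ext
    simp only at this
    omega

noncomputable def cPerm (μ : Equiv.Perm (Fin (2 * n))) (hinv : ∀ x, μ (μ x) = x)
    (hfpf : ∀ x, μ x ≠ x) : Equiv.Perm (Fin (2 * n)) :=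
  Equiv.ofBijective (cFun μ (minsSet_card μ hinv hfpf))
    ((Finite.injective_iff_bijective).mp (cFun_injective μ _ hinv))

lemma cPerm_congr {μ₁ μ₂ : Equiv.Perm (Fin (2 * n))} (hi1 : ∀ x, μ₁ (μ₁ x) = x)
    (hf1 : ∀ x, μ₁ x ≠ x) (hi2 : ∀ x, μ₂ (μ₂ x) = x) (hf2 : ∀ x, μ₂ x ≠ x)
    (h : μ₁ = μ₂) : cPerm μ₁ hi1 hf1 = cPerm μ₂ hi2 hf2 := by
  subst h; rfl

lemma cPerm_apply0 (μ : Equiv.Perm (Fin (2 * n))) (hinv : ∀ x, μ (μ x) = x)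
    (hfpf : ∀ x, μ x ≠ x) (i : Fin n) :
    cPerm μ hinv hfpf (pairIdx n i 0)
      = (minsSet μ).orderEmbOfFin (minsSet_card μ hinv hfpf) i := by
  show cFun μ _ (pairIdx n i 0) = _
  unfold cFun
  rw [if_pos (by rw [pairIdx_val, fin2_val0]; omega)]
  congr 1
  apply Fin.ext
  show ((pairIdx n i 0).val) / 2 = i.val
  rw [pairIdx_val, fin2_val0]
  omega

lemma cPerm_apply1 (μ : Equiv.Perm (Fin (2 * n))) (hinv : ∀ x, μ (μ x) = x)
    (hfpf : ∀ x, μ x ≠ x) (i : Fin n) :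
    cPerm μ hinv hfpf (pairIdx n i 1)
      = μ ((minsSet μ).orderEmbOfFin (minsSet_card μ hinv hfpf) i) := by
  show cFun μ _ (pairIdx n i 1) = _
  unfold cFun
  rw [if_neg (by rw [pairIdx_val, fin2_val1]; omega)]
  congr 2
  apply Fin.ext
  show ((pairIdx n i 1).val) / 2 = i.val
  rw [pairIdx_val, fin2_val1]
  omega

lemma cPerm_mem_pfSet (μ : Equiv.Perm (Fin (2 * n))) (hinv : ∀ x, μ (μ x) = x)
    (hfpf : ∀ x, μ x ≠ x) : cPerm μ hinv hfpf ∈ pfSet n := by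
  rw [pfSet, Finset.mem_filter]
  refine ⟨Finset.mem_univ _, fun i => ?_, fun i j hij => ?_⟩
  · rw [cPerm_apply0 μ hinv hfpf, cPerm_apply1 μ hinv hfpf]
    have := Finset.orderEmbOfFin_mem (minsSet μ) (minsSet_card μ hinv hfpf) i
    simp only [minsSet, Finset.mem_filter, Finset.mem_univ, true_and] at this
    exact this
  · rw [cPerm_apply0 μ hinv hfpf, cPerm_apply0 μ hinv hfpf]
    exact ((minsSet μ).orderEmbOfFin (minsSet_card μ hinv hfpf)).strictMono hij

lemma cPerm_conj (μ : Equiv.Perm (Fin (2 * n))) (hinv : ∀ x, μ (μ x) = x)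
    (hfpf : ∀ x, μ x ≠ x) :
    cPerm μ hinv hfpf * pairSwap n = μ * cPerm μ hinv hfpf := by
  apply Equiv.ext
  intro z
  obtain ⟨i, k, rfl⟩ := exists_pairIdx z
  rcases fin2_cases k with rfl | rfl
  · rw [Equiv.Perm.mul_apply, Equiv.Perm.mul_apply, pairSwap_pair0,
      cPerm_apply0 μ hinv hfpf, cPerm_apply1 μ hinv hfpf]
  · rw [Equiv.Perm.mul_apply, Equiv.Perm.mul_apply, pairSwap_pair1,
      cPerm_apply0 μ hinv hfpf, cPerm_apply1 μ hinv hfpf, hinv]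

lemma cPerm_unique (μ : Equiv.Perm (Fin (2 * n))) (hinv : ∀ x, μ (μ x) = x)
    (hfpf : ∀ x, μ x ≠ x) (σ : Equiv.Perm (Fin (2 * n))) (hσ : σ ∈ pfSet n)
    (hconj : σ * pairSwap n = μ * σ) : cPerm μ hinv hfpf = σ := by
  rw [pfSet, Finset.mem_filter] at hσ
  obtain ⟨-, h1, h2⟩ := hσ
  have happ : ∀ z, σ (pairSwap n z) = μ (σ z) := by
    intro z
    have := Equiv.ext_iff.mp hconj z
    simpa [Equiv.Perm.mul_apply] using this
  have hs1 : ∀ i : Fin n, σ (pairIdx n i 1) = μ (σ (pairIdx n i 0)) := by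
    intro i
    rw [← happ, pairSwap_pair0]
  have hfs : ∀ i : Fin n, σ (pairIdx n i 0) ∈ minsSet μ := by
    intro i
    simp only [minsSet, Finset.mem_filter, Finset.mem_univ, true_and]
    rw [← hs1 i]
    exact h1 i
  have hmono : StrictMono (fun i : Fin n => σ (pairIdx n i 0)) := by
    intro i j hij
    exact h2 i j hij
  have huniq := Finset.orderEmbOfFin_unique (minsSet_card μ hinv hfpf) hfs hmono
  apply Equiv.ext
  intro z
  obtain ⟨i, k, rfl⟩ := exists_pairIdx z
  rcases fin2_cases k with rfl | rfl
  · rw [cPerm_apply0 μ hinv hfpf]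
    exact (congrFun huniq i).symm
  · rw [cPerm_apply1 μ hinv hfpf, hs1]
    exact congrArg μ (congrFun huniq i).symm

end canonical

section lemA
variable {R : Type*} [CommRing R] {n : ℕ}

def mu (ρ : Equiv.Perm (Fin (2 * n))) : Equiv.Perm (Fin (2 * n)) :=
  ρ * pairSwap n * ρ⁻¹

lemma pairSwap_fpf (x : Fin (2 * n)) : pairSwap n x ≠ x := by
  intro h
  have := congrArg Fin.val h
  rw [pairSwap_val] at this
  split at this <;> omega

lemma mu_invol (ρ : Equiv.Perm (Fin (2 * n))) : ∀ x, mu ρ (mu ρ x) = x := by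
  intro x
  show (ρ * pairSwap n * ρ⁻¹) ((ρ * pairSwap n * ρ⁻¹) x) = x
  simp only [Equiv.Perm.mul_apply]
  rw [(show ∀ y, ρ⁻¹ (ρ y) = y from ρ.symm_apply_apply), pairSwap_invol,
    (show ∀ y, ρ (ρ⁻¹ y) = y from ρ.apply_symm_apply)]

lemma mu_fpf (ρ : Equiv.Perm (Fin (2 * n))) : ∀ x, mu ρ x ≠ x := by
  intro x h
  unfold mu at h
  simp only [Equiv.Perm.mul_apply] at h
  have h2 : ρ⁻¹ (ρ (pairSwap n (ρ⁻¹ x))) = ρ⁻¹ x := congrArg (fun z => ρ⁻¹ z) h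
  rw [(show ∀ y, ρ⁻¹ (ρ y) = y from ρ.symm_apply_apply)] at h2
  exact pairSwap_fpf _ h2

lemma mu_conj (ρ : Equiv.Perm (Fin (2 * n))) : ρ * pairSwap n = mu ρ * ρ := by
  unfold mu; group

lemma mu_mul (ρ₁ ρ₂ : Equiv.Perm (Fin (2 * n))) : mu (ρ₁ * ρ₂) = ρ₁ * mu ρ₂ * ρ₁⁻¹ := by
  unfold mu; group

lemma comm_of_mu_eq {ρ₁ ρ₂ : Equiv.Perm (Fin (2 * n))} (h : mu ρ₁ = mu ρ₂) :
    (ρ₁⁻¹ * ρ₂) * pairSwap n = pairSwap n * (ρ₁⁻¹ * ρ₂) := by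
  unfold mu at h
  calc (ρ₁⁻¹ * ρ₂) * pairSwap n = ρ₁⁻¹ * (ρ₂ * pairSwap n * ρ₂⁻¹) * ρ₂ := by group
    _ = ρ₁⁻¹ * (ρ₁ * pairSwap n * ρ₁⁻¹) * ρ₂ := by rw [h]
    _ = pairSwap n * (ρ₁⁻¹ * ρ₂) := by group

lemma mu_cPerm (μ : Equiv.Perm (Fin (2 * n))) (hinv : ∀ x, μ (μ x) = x)
    (hfpf : ∀ x, μ x ≠ x) : mu (cPerm μ hinv hfpf) = μ := by
  have h := cPerm_conj μ hinv hfpf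
  unfold mu
  rw [h]
  group

lemma cPerm_of_mem (σ : Equiv.Perm (Fin (2 * n))) (hσ : σ ∈ pfSet n) :
    cPerm (mu σ) (mu_invol σ) (mu_fpf σ) = σ :=
  cPerm_unique _ _ _ σ hσ (mu_conj σ)

lemma sum_pfTerm_mul (M : Matrix (Fin (2 * n)) (Fin (2 * n)) R)
    (hM : ∀ i j, M j i = - M i j) (τ : Equiv.Perm (Fin (2 * n))) :
    ∑ σ ∈ pfSet n, pfTerm M (τ * σ) = ∑ σ ∈ pfSet n, pfTerm M σ := by
  refine Finset.sum_nbij'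
    (fun σ => cPerm (mu (τ * σ)) (mu_invol _) (mu_fpf _))
    (fun σ => cPerm (mu (τ⁻¹ * σ)) (mu_invol _) (mu_fpf _))
    (fun σ _ => cPerm_mem_pfSet _ _ _)
    (fun σ _ => cPerm_mem_pfSet _ _ _)
    ?_ ?_ ?_
  · intro σ hσ
    have h1 : mu (τ⁻¹ * cPerm (mu (τ * σ)) (mu_invol _) (mu_fpf _)) = mu σ := by
      rw [mu_mul, mu_cPerm, mu_mul]
      group
    exact (cPerm_congr _ _ _ _ h1).trans (cPerm_of_mem σ hσ)
  · intro σ hσ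
    have h1 : mu (τ * cPerm (mu (τ⁻¹ * σ)) (mu_invol _) (mu_fpf _)) = mu σ := by
      rw [mu_mul, mu_cPerm, mu_mul]
      group
    exact (cPerm_congr _ _ _ _ h1).trans (cPerm_of_mem σ hσ)
  · intro σ hσ
    have hmueq : mu (cPerm (mu (τ * σ)) (mu_invol _) (mu_fpf _)) = mu (τ * σ) :=
      mu_cPerm _ _ _
    have hcomm := comm_of_mu_eq hmueq
    have hterm := pfTerm_mul_comm_aux M hM _
      ((cPerm (mu (τ * σ)) (mu_invol _) (mu_fpf _))⁻¹ * (τ * σ)) rfl hcomm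
      (cPerm (mu (τ * σ)) (mu_invol _) (mu_fpf _))
    calc pfTerm M (τ * σ)
        = pfTerm M ((cPerm (mu (τ * σ)) (mu_invol _) (mu_fpf _))
            * ((cPerm (mu (τ * σ)) (mu_invol _) (mu_fpf _))⁻¹ * (τ * σ))) := by
          rw [mul_inv_cancel_left]
      _ = pfTerm M (cPerm (mu (τ * σ)) (mu_invol _) (mu_fpf _)) := hterm

lemma pf_submatrix (M : Matrix (Fin (2 * n)) (Fin (2 * n)) R)
    (hM : ∀ i j, M j i = - M i j) (τ : Equiv.Perm (Fin (2 * n))) :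
    pf (M.submatrix τ τ) = ((Equiv.Perm.sign τ : ℤ) : R) * pf M := by
  rw [pf_eq, pf_eq, ← sum_pfTerm_mul M hM τ, Finset.mul_sum]
  refine Finset.sum_congr rfl fun σ _ => ?_
  unfold pfTerm
  rw [_root_.map_mul]
  simp only [Matrix.submatrix_apply, Equiv.Perm.mul_apply]
  rcases Int.units_eq_one_or (Equiv.Perm.sign τ) with h | h <;> rw [h] <;> push_cast <;> ring

end lemA
end PfProof

namespace PfProof
open Equiv Equiv.Perm Finset

section blockdiag
variable {R : Type*} [CommRing R] (a b : ℕ)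

def bd (C : Matrix (Fin (2 * a)) (Fin (2 * a)) R) (D : Matrix (Fin (2 * b)) (Fin (2 * b)) R) :
    Matrix (Fin (2 * (a + b))) (Fin (2 * (a + b))) R :=
  Matrix.of fun i j =>
    if hi : i.val < 2 * a then
      if hj : j.val < 2 * a then C ⟨i.val, hi⟩ ⟨j.val, hj⟩ else 0
    else
      if hj : j.val < 2 * a then 0
      else D ⟨i.val - 2 * a, by have := i.isLt; omega⟩ ⟨j.val - 2 * a, by have := j.isLt; omega⟩

def sumEquiv : (Fin (2 * a) ⊕ Fin (2 * b)) ≃ Fin (2 * (a + b)) where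
  toFun x := Sum.elim (fun u : Fin (2 * a) => (⟨u.val, by have := u.isLt; omega⟩ : Fin (2 * (a + b))))
    (fun v : Fin (2 * b) => (⟨2 * a + v.val, by have := v.isLt; omega⟩ : Fin (2 * (a + b)))) x
  invFun x := if h : x.val < 2 * a then Sum.inl ⟨x.val, h⟩
    else Sum.inr ⟨x.val - 2 * a, by have := x.isLt; omega⟩
  left_inv := by
    rintro (u | v)
    · simp only [Sum.elim_inl]
      exact dif_pos u.isLt
    · simp only [Sum.elim_inr]
      refine (dif_neg (show ¬(2 * a + v.val < 2 * a) by omega)).trans ?_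
      congr 1
      apply Fin.ext
      show 2 * a + v.val - 2 * a = v.val
      omega
  right_inv := by
    intro x
    dsimp only
    by_cases h : x.val < 2 * a
    · rw [dif_pos h]
      rfl
    · rw [dif_neg h]
      apply Fin.ext
      show 2 * a + (x.val - 2 * a) = x.val
      have := x.isLt
      omega

lemma sumEquiv_inl_val (u : Fin (2 * a)) : (sumEquiv a b (Sum.inl u)).val = u.val := rfl
lemma sumEquiv_inr_val (v : Fin (2 * b)) : (sumEquiv a b (Sum.inr v)).val = 2 * a + v.val := rfl

def jperm (α : Equiv.Perm (Fin (2 * a))) (β : Equiv.Perm (Fin (2 * b))) :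
    Equiv.Perm (Fin (2 * (a + b))) :=
  (sumEquiv a b).permCongr (Equiv.Perm.sumCongr α β)

variable {a b}
variable (α : Equiv.Perm (Fin (2 * a))) (β : Equiv.Perm (Fin (2 * b)))

lemma jperm_inl (u : Fin (2 * a)) :
    jperm a b α β (sumEquiv a b (Sum.inl u)) = sumEquiv a b (Sum.inl (α u)) := by
  unfold jperm
  rw [Equiv.permCongr_apply, Equiv.symm_apply_apply]
  rfl

lemma jperm_inr (v : Fin (2 * b)) :
    jperm a b α β (sumEquiv a b (Sum.inr v)) = sumEquiv a b (Sum.inr (β v)) := by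
  unfold jperm
  rw [Equiv.permCongr_apply, Equiv.symm_apply_apply]
  rfl

lemma pairIdx_split_lo (i : Fin (a + b)) (hi : i.val < a) (k : Fin 2) :
    pairIdx (a + b) i k = sumEquiv a b (Sum.inl (pairIdx a ⟨i.val, hi⟩ k)) := rfl

lemma pairIdx_split_hi (i : Fin (a + b)) (hi : a ≤ i.val) (k : Fin 2) :
    pairIdx (a + b) i k
      = sumEquiv a b (Sum.inr (pairIdx b ⟨i.val - a, by have := i.isLt; omega⟩ k)) := by
  apply Fin.ext
  show 2 * i.val + k.val = 2 * a + (2 * (i.val - a) + k.val)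
  omega

lemma sumEquiv_inl_pairIdx (i : Fin a) (k : Fin 2) :
    sumEquiv a b (Sum.inl (pairIdx a i k)) = pairIdx (a + b) ⟨i.val, by omega⟩ k := rfl

lemma sumEquiv_inr_pairIdx (i : Fin b) (k : Fin 2) :
    sumEquiv a b (Sum.inr (pairIdx b i k)) = pairIdx (a + b) ⟨a + i.val, by omega⟩ k := by
  apply Fin.ext
  show 2 * a + (2 * i.val + k.val) = 2 * (a + i.val) + k.val
  omega

lemma mem_pfSet_iff {m : ℕ} (σ : Equiv.Perm (Fin (2 * m))) :
    σ ∈ pfSet m ↔ ((∀ i : Fin m, (σ (pairIdx m i 0)).val < (σ (pairIdx m i 1)).val) ∧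
      (∀ i j : Fin m, i < j → (σ (pairIdx m i 0)).val < (σ (pairIdx m j 0)).val)) := by
  rw [pfSet, Finset.mem_filter]
  simp only [Finset.mem_univ, true_and]

lemma jperm_mem (hα : α ∈ pfSet a) (hβ : β ∈ pfSet b) : jperm a b α β ∈ pfSet (a + b) := by
  rw [mem_pfSet_iff] at hα hβ ⊢
  obtain ⟨hα1, hα2⟩ := hα
  obtain ⟨hβ1, hβ2⟩ := hβ
  constructor
  · intro i
    by_cases hi : i.val < a
    · rw [pairIdx_split_lo i hi 0, pairIdx_split_lo i hi 1, jperm_inl, jperm_inl,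
        sumEquiv_inl_val, sumEquiv_inl_val]
      exact hα1 _
    · rw [pairIdx_split_hi i (by omega) 0, pairIdx_split_hi i (by omega) 1, jperm_inr, jperm_inr,
        sumEquiv_inr_val, sumEquiv_inr_val]
      have := hβ1 (⟨i.val - a, by have := i.isLt; omega⟩ : Fin b)
      omega
  · intro i j hij
    have hijv : i.val < j.val := hij
    by_cases hi : i.val < a <;> by_cases hj : j.val < a
    · rw [pairIdx_split_lo i hi 0, pairIdx_split_lo j hj 0, jperm_inl, jperm_inl,
        sumEquiv_inl_val, sumEquiv_inl_val]
      exact hα2 _ _ (by show i.val < j.val; exact hijv)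
    · rw [pairIdx_split_lo i hi 0, pairIdx_split_hi j (by omega) 0, jperm_inl, jperm_inr,
        sumEquiv_inl_val, sumEquiv_inr_val]
      have := (α (pairIdx a ⟨i.val, hi⟩ 0)).isLt
      omega
    · omega
    · rw [pairIdx_split_hi i (by omega) 0, pairIdx_split_hi j (by omega) 0, jperm_inr, jperm_inr,
        sumEquiv_inr_val, sumEquiv_inr_val]
      have := hβ2 (⟨i.val - a, by have := i.isLt; omega⟩ : Fin b)
        (⟨j.val - a, by have := j.isLt; omega⟩ : Fin b) (by show i.val - a < j.val - a; omega)
      omega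

def splitP {m : ℕ} (c : ℕ) (σ : Equiv.Perm (Fin (2 * m))) : Prop :=
  ∀ i : Fin m, ((σ (pairIdx m i 0)).val < c ↔ (σ (pairIdx m i 1)).val < c)

instance {m c : ℕ} (σ : Equiv.Perm (Fin (2 * m))) : Decidable (splitP c σ) := by
  unfold splitP; infer_instance

lemma jperm_splitP : splitP (2 * a) (jperm a b α β) := by
  intro i
  by_cases hi : i.val < a
  · rw [pairIdx_split_lo i hi 0, pairIdx_split_lo i hi 1, jperm_inl, jperm_inl,
      sumEquiv_inl_val, sumEquiv_inl_val]
    have h0 := (α (pairIdx a ⟨i.val, hi⟩ 0)).isLt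
    have h1 := (α (pairIdx a ⟨i.val, hi⟩ 1)).isLt
    constructor <;> intro <;> omega
  · rw [pairIdx_split_hi i (by omega) 0, pairIdx_split_hi i (by omega) 1, jperm_inr, jperm_inr,
      sumEquiv_inr_val, sumEquiv_inr_val]
    constructor <;> intro h <;> omega

lemma pfTerm_jperm (C : Matrix (Fin (2 * a)) (Fin (2 * a)) R)
    (D : Matrix (Fin (2 * b)) (Fin (2 * b)) R) :
    pfTerm (bd a b C D) (jperm a b α β) = pfTerm C α * pfTerm D β := by
  unfold pfTerm
  have hsign : Equiv.Perm.sign (jperm a b α β) = Equiv.Perm.sign α * Equiv.Perm.sign β := by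
    unfold jperm
    rw [Equiv.Perm.sign_permCongr, Equiv.Perm.sign_sumCongr]
  have hprod : (∏ i : Fin (a + b),
      bd a b C D (jperm a b α β (pairIdx (a + b) i 0)) (jperm a b α β (pairIdx (a + b) i 1)))
      = (∏ i : Fin a, C (α (pairIdx a i 0)) (α (pairIdx a i 1)))
        * ∏ i : Fin b, D (β (pairIdx b i 0)) (β (pairIdx b i 1)) := by
    rw [Fin.prod_univ_add (fun i : Fin (a + b) =>
      bd a b C D (jperm a b α β (pairIdx (a + b) i 0)) (jperm a b α β (pairIdx (a + b) i 1)))]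
    congr 1
    · refine Finset.prod_congr rfl fun i _ => ?_
      have hv : (Fin.castAdd b i).val = i.val := rfl
      have hlt : (Fin.castAdd b i).val < a := by rw [hv]; exact i.isLt
      rw [pairIdx_split_lo (Fin.castAdd b i) hlt 0, pairIdx_split_lo (Fin.castAdd b i) hlt 1,
        jperm_inl, jperm_inl]
      have hi : (⟨(Fin.castAdd b i).val, hlt⟩ : Fin a) = i := Fin.ext rfl
      rw [hi]
      show bd a b C D _ _ = _
      unfold bd
      rw [Matrix.of_apply,
        dif_pos (show ((sumEquiv a b (Sum.inl (α (pairIdx a i 0)))).val < 2 * a) from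
          (α (pairIdx a i 0)).isLt),
        dif_pos (show ((sumEquiv a b (Sum.inl (α (pairIdx a i 1)))).val < 2 * a) from
          (α (pairIdx a i 1)).isLt)]
      congr 1
    · refine Finset.prod_congr rfl fun i _ => ?_
      have hv : (Fin.natAdd a i).val = a + i.val := rfl
      have hge : a ≤ (Fin.natAdd a i).val := by rw [hv]; omega
      rw [pairIdx_split_hi (Fin.natAdd a i) hge 0, pairIdx_split_hi (Fin.natAdd a i) hge 1,
        jperm_inr, jperm_inr]
      have hi : (⟨(Fin.natAdd a i).val - a, by have := (Fin.natAdd a i).isLt; omega⟩ : Fin b) = i := by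
        apply Fin.ext
        show a + i.val - a = i.val
        omega
      rw [hi]
      show bd a b C D _ _ = _
      unfold bd
      rw [Matrix.of_apply,
        dif_neg (show ¬ ((sumEquiv a b (Sum.inr (β (pairIdx b i 0)))).val < 2 * a) by
          rw [sumEquiv_inr_val]; omega),
        dif_neg (show ¬ ((sumEquiv a b (Sum.inr (β (pairIdx b i 1)))).val < 2 * a) by
          rw [sumEquiv_inr_val]; omega)]
      congr 1 <;> apply Fin.ext <;>
        · show 2 * a + _ - 2 * a = _
          omega
  rw [hprod, hsign]
  push_cast
  ring

lemma card_filter_val_lt (m c : ℕ) :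
    ((Finset.univ : Finset (Fin m)).filter (fun x => x.val < c)).card = min c m := by
  rw [← Finset.card_range (min c m)]
  apply Finset.card_nbij (i := Fin.val)
  · intro x hx
    simp only [Finset.coe_filter, Finset.mem_coe, Finset.mem_filter, Finset.mem_univ, true_and,
      Set.mem_setOf_eq] at hx
    simp only [Finset.coe_range, Set.mem_Iio, Finset.mem_coe, Finset.mem_range]
    have := x.isLt
    omega
  · intro x _ y _ hxy
    exact Fin.ext hxy
  · intro y hy
    simp only [Finset.coe_filter, Finset.mem_range, Set.mem_setOf_eq, Finset.mem_coe,
      Finset.mem_univ, true_and, Set.mem_image] at hy ⊢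
    refine ⟨⟨y, by omega⟩, by simpa using (by omega : y < c), rfl⟩

lemma split_exists (σ : Equiv.Perm (Fin (2 * (a + b)))) (hσ : σ ∈ pfSet (a + b))
    (hP : splitP (2 * a) σ) :
    ∃ q : Equiv.Perm (Fin (2 * a)) × Equiv.Perm (Fin (2 * b)),
      (q.1 ∈ pfSet a ∧ q.2 ∈ pfSet b) ∧ jperm a b q.1 q.2 = σ := by
  rw [mem_pfSet_iff] at hσ
  obtain ⟨hσ1, hσ2⟩ := hσ
  set S := Finset.univ.filter
    (fun i : Fin (a + b) => (σ (pairIdx (a + b) i 0)).val < 2 * a) with hSdef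
  have hmemS : ∀ i, i ∈ S ↔ (σ (pairIdx (a + b) i 0)).val < 2 * a := by
    intro i
    rw [hSdef, Finset.mem_filter]
    simp only [Finset.mem_univ, true_and]
  have hdown : ∀ i j : Fin (a + b), i.val ≤ j.val → j ∈ S → i ∈ S := by
    intro i j hij hj
    rw [hmemS] at hj ⊢
    rcases Nat.eq_or_lt_of_le hij with heq | hlt
    · rwa [show i = j from Fin.ext heq]
    · have := hσ2 i j (by show i.val < j.val; omega)
      omega
  have hScard : S.card = a := by
    have h2a : ((Finset.univ : Finset (Fin (2 * (a + b)))).filter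
        (fun x => x.val < 2 * a)).card = 2 * a := by
      rw [card_filter_val_lt]
      omega
    have himg : (Finset.univ : Finset (Fin (2 * (a + b)))).filter (fun x => x.val < 2 * a)
        = (S ×ˢ (Finset.univ : Finset (Fin 2))).image
            (fun q => σ (pairIdx (a + b) q.1 q.2)) := by
      ext x
      simp only [Finset.mem_filter, Finset.mem_univ, true_and, Finset.mem_image,
        Finset.mem_product]
      constructor
      · intro hx
        obtain ⟨i, k, hik⟩ := exists_pairIdx (σ.symm x)
        have hx' : σ (pairIdx (a + b) i k) = x := by
          rw [← hik, Equiv.apply_symm_apply]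
        refine ⟨(i, k), ⟨?_, trivial⟩, hx'⟩
        rw [hmemS]
        rcases fin2_cases k with rfl | rfl
        · rw [hx']; exact hx
        · exact (hP i).mpr (by rw [hx']; exact hx)
      · rintro ⟨⟨i, k⟩, ⟨hiS, -⟩, rfl⟩
        rw [hmemS] at hiS
        rcases fin2_cases k with rfl | rfl
        · exact hiS
        · exact (hP i).mp hiS
    have hinj : Set.InjOn (fun q : Fin (a + b) × Fin 2 => σ (pairIdx (a + b) q.1 q.2))
        ↑(S ×ˢ (Finset.univ : Finset (Fin 2))) := by
      rintro ⟨i, k⟩ - ⟨j, l⟩ - h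
      have hh := pairIdx_inj (σ.injective h)
      rw [Prod.mk.injEq]
      exact hh
    rw [himg, Finset.card_image_of_injOn hinj, Finset.card_product, Finset.card_univ,
      Fintype.card_fin] at h2a
    omega
  have hSiff : ∀ i : Fin (a + b), i ∈ S ↔ i.val < a := by
    intro i
    constructor
    · intro hi
      by_contra hcon
      have hsub : Finset.univ.filter (fun j : Fin (a + b) => j.val < i.val + 1) ⊆ S := by
        intro j hj
        simp only [Finset.mem_filter, Finset.mem_univ, true_and] at hj
        exact hdown j i (by omega) hi
      have hc := Finset.card_le_card hsub
      rw [card_filter_val_lt, hScard] at hc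
      have := i.isLt
      omega
    · intro hi
      by_contra hcon
      have hsub : S ⊆ Finset.univ.filter (fun j : Fin (a + b) => j.val < i.val) := by
        intro j hj
        simp only [Finset.mem_filter, Finset.mem_univ, true_and]
        by_contra hcon2
        exact hcon (hdown i j (by omega) hj)
      have hc := Finset.card_le_card hsub
      rw [card_filter_val_lt, hScard] at hc
      omega
  have hlow : ∀ x : Fin (2 * (a + b)), x.val < 2 * a → (σ x).val < 2 * a := by
    intro x hx
    obtain ⟨i, k, rfl⟩ := exists_pairIdx x
    have hk := k.isLt
    have hxv : (pairIdx (a + b) i k).val = 2 * i.val + k.val := rfl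
    have hi : i.val < a := by omega
    have hiS : i ∈ S := (hSiff i).mpr hi
    rw [hmemS] at hiS
    rcases fin2_cases k with rfl | rfl
    · exact hiS
    · exact (hP i).mp hiS
  have hhigh : ∀ x : Fin (2 * (a + b)), 2 * a ≤ x.val → 2 * a ≤ (σ x).val := by
    intro x hx
    obtain ⟨i, k, rfl⟩ := exists_pairIdx x
    have hk := k.isLt
    have hxv : (pairIdx (a + b) i k).val = 2 * i.val + k.val := rfl
    have hi : a ≤ i.val := by omega
    have hiS : i ∉ S := fun hh => by have := (hSiff i).mp hh; omega
    rw [hmemS] at hiS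
    rcases fin2_cases k with rfl | rfl
    · omega
    · have : ¬ (σ (pairIdx (a + b) i 1)).val < 2 * a := fun hh => hiS ((hP i).mpr hh)
      omega
  -- construct α
  have hαlt : ∀ u : Fin (2 * a), (σ (sumEquiv a b (Sum.inl u))).val < 2 * a := by
    intro u
    exact hlow _ (by rw [sumEquiv_inl_val]; exact u.isLt)
  have hαinj : Function.Injective
      (fun u : Fin (2 * a) => (⟨(σ (sumEquiv a b (Sum.inl u))).val, hαlt u⟩ : Fin (2 * a))) := by
    intro u w h
    have hv := congrArg Fin.val h
    have h2 : σ (sumEquiv a b (Sum.inl u)) = σ (sumEquiv a b (Sum.inl w)) := Fin.ext hv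
    exact Sum.inl.inj ((sumEquiv a b).injective (σ.injective h2))
  let α : Equiv.Perm (Fin (2 * a)) :=
    Equiv.ofBijective _ ((Finite.injective_iff_bijective).mp hαinj)
  have hαval : ∀ u, (α u).val = (σ (sumEquiv a b (Sum.inl u))).val := fun u => rfl
  -- construct β
  have hβge : ∀ v : Fin (2 * b), 2 * a ≤ (σ (sumEquiv a b (Sum.inr v))).val := by
    intro v
    exact hhigh _ (by rw [sumEquiv_inr_val]; omega)
  have hβlt : ∀ v : Fin (2 * b), (σ (sumEquiv a b (Sum.inr v))).val - 2 * a < 2 * b := by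
    intro v
    have h1 := (σ (sumEquiv a b (Sum.inr v))).isLt
    have h2 := hβge v
    omega
  have hβinj : Function.Injective
      (fun v : Fin (2 * b) => (⟨(σ (sumEquiv a b (Sum.inr v))).val - 2 * a, hβlt v⟩ : Fin (2 * b))) := by
    intro u w h
    have hv0 := congrArg Fin.val h
    have hv : (σ (sumEquiv a b (Sum.inr u))).val - 2 * a
        = (σ (sumEquiv a b (Sum.inr w))).val - 2 * a := hv0
    have h1 := hβge u
    have h2 := hβge w
    have h3 : σ (sumEquiv a b (Sum.inr u)) = σ (sumEquiv a b (Sum.inr w)) :=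
      Fin.ext (by omega)
    exact Sum.inr.inj ((sumEquiv a b).injective (σ.injective h3))
  let β : Equiv.Perm (Fin (2 * b)) :=
    Equiv.ofBijective _ ((Finite.injective_iff_bijective).mp hβinj)
  have hβval : ∀ v, (β v).val = (σ (sumEquiv a b (Sum.inr v))).val - 2 * a := fun v => rfl
  refine ⟨(α, β), ⟨?_, ?_⟩, ?_⟩
  · rw [mem_pfSet_iff]
    constructor
    · intro i
      rw [hαval, hαval, sumEquiv_inl_pairIdx, sumEquiv_inl_pairIdx]
      exact hσ1 _
    · intro i j hij
      rw [hαval, hαval, sumEquiv_inl_pairIdx, sumEquiv_inl_pairIdx]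
      exact hσ2 _ _ (by show i.val < j.val; exact hij)
  · rw [mem_pfSet_iff]
    constructor
    · intro i
      rw [hβval, hβval, sumEquiv_inr_pairIdx, sumEquiv_inr_pairIdx]
      have hge0 := hβge (pairIdx b i 0)
      have hge1 := hβge (pairIdx b i 1)
      rw [sumEquiv_inr_pairIdx] at hge0 hge1
      have := hσ1 (⟨a + i.val, by omega⟩ : Fin (a + b))
      omega
    · intro i j hij
      rw [hβval, hβval, sumEquiv_inr_pairIdx, sumEquiv_inr_pairIdx]
      have hge0 := hβge (pairIdx b i 0)
      have hge1 := hβge (pairIdx b j 0)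
      rw [sumEquiv_inr_pairIdx] at hge0 hge1
      have := hσ2 (⟨a + i.val, by omega⟩ : Fin (a + b)) (⟨a + j.val, by omega⟩ : Fin (a + b))
        (by show a + i.val < a + j.val; have : i.val < j.val := hij; omega)
      omega
  · apply Equiv.ext
    intro x
    obtain ⟨w, rfl⟩ := (sumEquiv a b).surjective x
    cases w with
    | inl u =>
      rw [jperm_inl]
      apply Fin.ext
      rw [sumEquiv_inl_val]
      exact hαval u
    | inr v =>
      rw [jperm_inr]
      apply Fin.ext
      rw [sumEquiv_inr_val, hβval]
      have := hβge v
      omega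

lemma pf_bd (C : Matrix (Fin (2 * a)) (Fin (2 * a)) R)
    (D : Matrix (Fin (2 * b)) (Fin (2 * b)) R) :
    pf (bd a b C D) = pf C * pf D := by
  rw [pf_eq, pf_eq, pf_eq]
  have hvan : ∀ σ ∈ pfSet (a + b), pfTerm (bd a b C D) σ ≠ 0 → splitP (2 * a) σ := by
    intro σ _ hne
    by_contra hcon
    unfold splitP at hcon
    push_neg at hcon
    obtain ⟨i, hi⟩ := hcon
    apply hne
    unfold pfTerm
    rw [Finset.prod_eq_zero (Finset.mem_univ i), mul_zero]
    show bd a b C D _ _ = 0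
    unfold bd
    rw [Matrix.of_apply]
    by_cases hc0 : (σ (pairIdx (a + b) i 0)).val < 2 * a <;>
      by_cases hc1 : (σ (pairIdx (a + b) i 1)).val < 2 * a
    · exfalso
      rcases hi with ⟨h1, h2⟩ | ⟨h1, h2⟩ <;> omega
    · rw [dif_pos hc0, dif_neg hc1]
    · rw [dif_neg hc0, dif_pos hc1]
    · exfalso
      rcases hi with ⟨h1, h2⟩ | ⟨h1, h2⟩ <;> omega
  rw [← Finset.sum_filter_of_ne hvan, Finset.sum_mul_sum, ← Finset.sum_product']
  refine (Finset.sum_nbij (fun q : Equiv.Perm (Fin (2 * a)) × Equiv.Perm (Fin (2 * b)) =>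
    jperm a b q.1 q.2) ?_ ?_ ?_ ?_).symm
  · rintro ⟨α, β⟩ hq
    rw [Finset.mem_product] at hq
    rw [Finset.mem_filter]
    exact ⟨jperm_mem α β hq.1 hq.2, jperm_splitP α β⟩
  · rintro ⟨α, β⟩ - ⟨α', β'⟩ - h
    have hα : α = α' := by
      apply Equiv.ext
      intro u
      have := Equiv.ext_iff.mp h (sumEquiv a b (Sum.inl u))
      rw [jperm_inl, jperm_inl] at this
      exact Sum.inl.inj ((sumEquiv a b).injective this)
    have hβ : β = β' := by
      apply Equiv.ext
      intro v
      have := Equiv.ext_iff.mp h (sumEquiv a b (Sum.inr v))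
      rw [jperm_inr, jperm_inr] at this
      exact Sum.inr.inj ((sumEquiv a b).injective this)
    rw [Prod.mk.injEq]
    exact ⟨hα, hβ⟩
  · intro σ hσ
    simp only [Finset.coe_filter, Set.mem_setOf_eq, Finset.mem_coe] at hσ
    obtain ⟨hσ1, hσ2⟩ := hσ
    obtain ⟨q, ⟨hq1, hq2⟩, hq3⟩ := split_exists σ hσ1 hσ2
    refine ⟨q, ?_, hq3⟩
    simp only [Finset.coe_product, Set.mem_prod, Finset.mem_coe]
    exact ⟨hq1, hq2⟩
  · rintro ⟨α, β⟩ -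
    exact (pfTerm_jperm α β C D).symm

lemma pf_smul {m : ℕ} (x : R) (C : Matrix (Fin (2 * m)) (Fin (2 * m)) R) :
    pf (x • C) = x ^ m * pf C := by
  rw [pf_eq, pf_eq, Finset.mul_sum]
  refine Finset.sum_congr rfl fun σ _ => ?_
  unfold pfTerm
  have : ∀ i : Fin m, (x • C) (σ (pairIdx m i 0)) (σ (pairIdx m i 1))
      = x * C (σ (pairIdx m i 0)) (σ (pairIdx m i 1)) := fun i => rfl
  rw [Finset.prod_congr rfl (fun i _ => this i), Finset.prod_mul_distrib, Finset.prod_const,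
    Finset.card_univ, Fintype.card_fin]
  ring

end blockdiag
end PfProof

namespace PfProof
open Equiv Equiv.Perm Finset

section assembly
variable {F : Type*} [Field F]

lemma Jmat_apply (m : ℕ) (x y : Fin (2 * m)) :
    Jmat F m x y = if (x : ℕ) + (y : ℕ) = 2 * m - 1 then
      (-1 : F) ^ (min (x : ℕ) (y : ℕ)) / 2 else 0 := by
  unfold Jmat
  rw [Matrix.of_apply]
  by_cases h : (x : ℕ) + (y : ℕ) = 2 * m - 1
  · rw [if_pos h, if_pos h]
    rcases Nat.lt_or_ge (x : ℕ) (y : ℕ) with hlt | hge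
    · rw [if_pos hlt]
      have hmin : min (x : ℕ) (y : ℕ) = (x : ℕ) := by omega
      rw [hmin]
    · rw [if_neg (Nat.not_lt.mpr hge)]
      have hmin : min (x : ℕ) (y : ℕ) = (y : ℕ) := by omega
      rw [hmin]
  · rw [if_neg h, if_neg h]

lemma Jmat_symm (m : ℕ) (k j : Fin (2 * m)) : Jmat F m k j = Jmat F m j k := by
  rw [Jmat_apply, Jmat_apply]
  by_cases h : (k : ℕ) + (j : ℕ) = 2 * m - 1
  · rw [if_pos h, if_pos (show (j : ℕ) + (k : ℕ) = 2 * m - 1 by omega)]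
    rw [Nat.min_comm]
  · rw [if_neg h, if_neg (show ¬((j : ℕ) + (k : ℕ) = 2 * m - 1) by omega)]

lemma Jmat_mul_apply {m : ℕ} (X : Matrix (Fin (2 * m)) (Fin (2 * m)) F) (i j : Fin (2 * m)) :
    (Jmat F m * X) i j = ((-1 : F) ^ (min i.val (2 * m - 1 - i.val)) / 2)
      * X ⟨2 * m - 1 - i.val, by have := i.isLt; omega⟩ j := by
  have him := i.isLt
  rw [Matrix.mul_apply]
  rw [Finset.sum_eq_single (⟨2 * m - 1 - i.val, by omega⟩ : Fin (2 * m))]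
  · congr 1
    rw [Jmat_apply]
    split_ifs with h1
    · rfl
    · exfalso
      apply h1
      show i.val + (2 * m - 1 - i.val) = 2 * m - 1
      omega
  · intro k _ hk
    have hkv : k.val ≠ 2 * m - 1 - i.val := fun h => hk (Fin.ext h)
    rw [Jmat_apply, if_neg (show ¬((i : ℕ) + (k : ℕ) = 2 * m - 1) by omega), zero_mul]
  · intro h
    exact absurd (Finset.mem_univ _) h

variable (a b : ℕ)

def shiftEquiv : (Fin (2 * a + b) ⊕ Fin b) ≃ Fin (2 * (a + b)) where
  toFun x := Sum.elim (fun u : Fin (2 * a + b) => (⟨u.val, by have := u.isLt; omega⟩ : Fin (2 * (a + b))))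
    (fun v : Fin b => (⟨2 * a + b + v.val, by have := v.isLt; omega⟩ : Fin (2 * (a + b)))) x
  invFun x := if h : x.val < 2 * a + b then Sum.inl ⟨x.val, h⟩
    else Sum.inr ⟨x.val - (2 * a + b), by have := x.isLt; omega⟩
  left_inv := by
    rintro (u | v)
    · simp only [Sum.elim_inl]
      exact dif_pos u.isLt
    · simp only [Sum.elim_inr]
      refine (dif_neg (show ¬(2 * a + b + v.val < 2 * a + b) by omega)).trans ?_
      congr 1
      apply Fin.ext
      show 2 * a + b + v.val - (2 * a + b) = v.val
      omega
  right_inv := by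
    intro x
    dsimp only
    by_cases h : x.val < 2 * a + b
    · rw [dif_pos h]
      rfl
    · rw [dif_neg h]
      apply Fin.ext
      show 2 * a + b + (x.val - (2 * a + b)) = x.val
      have := x.isLt
      omega

noncomputable def rho : Equiv.Perm (Fin (2 * (a + b))) :=
  (shiftEquiv a b).permCongr
    (Equiv.Perm.sumCongr ((finRotate (2 * a + b)) ^ (2 * a)) 1)

lemma sign_rho : Equiv.Perm.sign (rho a b) = 1 := by
  unfold rho
  rw [Equiv.Perm.sign_permCongr, Equiv.Perm.sign_sumCongr, map_pow, pow_mul,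
    Int.units_sq, one_pow, _root_.map_one, mul_one]

lemma rotpow (n k : ℕ) : ∀ u : Fin (n + 1),
    (((finRotate (n + 1)) ^ k) u).val = (u.val + k) % (n + 1) := by
  induction k with
  | zero =>
    intro u
    simp [Nat.mod_eq_of_lt u.isLt]
  | succ k ih =>
    intro u
    rw [pow_succ, Equiv.Perm.mul_apply, ih, finRotate_succ_apply, Fin.val_add, Fin.val_one',
      Nat.mod_add_mod, Nat.add_right_comm, Nat.add_mod_mod, Nat.add_assoc]

lemma rotpow' (N k : ℕ) (u : Fin N) : (((finRotate N) ^ k) u).val = (u.val + k) % N := by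
  cases N with
  | zero => exact absurd u.isLt (by omega)
  | succ n => exact rotpow n k u

lemma rho_val (x : Fin (2 * (a + b))) : (rho a b x).val =
    if x.val < b then x.val + 2 * a
    else if x.val < 2 * a + b then x.val - b
    else x.val := by
  unfold rho
  rw [Equiv.permCongr_apply]
  by_cases hx : x.val < 2 * a + b
  · have hsymm : (shiftEquiv a b).symm x = Sum.inl ⟨x.val, hx⟩ := by
      rw [Equiv.symm_apply_eq]
      rfl
    rw [hsymm]
    have happ : (Equiv.Perm.sumCongr ((finRotate (2 * a + b)) ^ (2 * a))
        (1 : Equiv.Perm (Fin b))) (Sum.inl ⟨x.val, hx⟩)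
        = Sum.inl (((finRotate (2 * a + b)) ^ (2 * a)) ⟨x.val, hx⟩) := rfl
    rw [happ]
    have hval : (shiftEquiv a b (Sum.inl (((finRotate (2 * a + b)) ^ (2 * a)) ⟨x.val, hx⟩))).val
        = (((finRotate (2 * a + b)) ^ (2 * a)) (⟨x.val, hx⟩ : Fin (2 * a + b))).val := rfl
    show (shiftEquiv a b (Sum.inl (((finRotate (2 * a + b)) ^ (2 * a)) ⟨x.val, hx⟩))).val = _
    rw [hval, rotpow']
    have hg : ((⟨x.val, hx⟩ : Fin (2 * a + b)) : ℕ) = x.val := rfl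
    rw [hg]
    by_cases hxb : x.val < b
    · rw [if_pos hxb]
      exact Nat.mod_eq_of_lt (by omega)
    · rw [if_neg hxb, if_pos hx]
      rw [Nat.mod_eq_sub_mod (show x.val + 2 * a ≥ 2 * a + b by omega)]
      have h2 : x.val + 2 * a - (2 * a + b) = x.val - b := by omega
      rw [h2]
      exact Nat.mod_eq_of_lt (by omega)
  · have hsymm : (shiftEquiv a b).symm x
        = Sum.inr ⟨x.val - (2 * a + b), by have := x.isLt; omega⟩ := by
      rw [Equiv.symm_apply_eq]
      apply Fin.ext
      show x.val = 2 * a + b + (x.val - (2 * a + b))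
      omega
    rw [hsymm]
    rw [if_neg (by omega), if_neg hx]
    show 2 * a + b + (x.val - (2 * a + b)) = x.val
    omega

end assembly
end PfProof

namespace PfProof
open Equiv Equiv.Perm Finset

section final
variable {F : Type*} [Field F] (a b : ℕ)
  (A : Matrix (Fin (2 * a)) (Fin (2 * a)) F) (B : Matrix (Fin (2 * b)) (Fin (2 * b)) F)

def psiBig : Matrix (Fin (2 * (a + b))) (Fin (2 * (a + b))) F :=
  Matrix.of fun i j =>
    if hi : b ≤ (i : ℕ) ∧ (i : ℕ) < b + 2 * a then
      if hj : b ≤ (j : ℕ) ∧ (j : ℕ) < b + 2 * a then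
        A ⟨(i : ℕ) - b, by omega⟩ ⟨(j : ℕ) - b, by omega⟩
      else 0
    else
      if hj : b ≤ (j : ℕ) ∧ (j : ℕ) < b + 2 * a then 0
      else
        B ⟨if (i : ℕ) < b then (i : ℕ) else (i : ℕ) - 2 * a,
            by have := i.isLt; split_ifs <;> omega⟩
          ⟨if (j : ℕ) < b then (j : ℕ) else (j : ℕ) - 2 * a,
            by have := j.isLt; split_ifs <;> omega⟩

lemma reindex_psi (h : 2 * a + 2 * b = 2 * (a + b)) :
    Matrix.reindex (finCongr h) (finCongr h) (psi a b A B) = psiBig a b A B := by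
  ext i j
  rfl

set_option maxHeartbeats 2000000 in
lemma key_eq :
    Jmat F (a + b) * psiBig a b A B
      = (bd a b (((-1 : F) ^ b) • (Jmat F a * A)) (Jmat F b * B)).submatrix
          (rho a b) (rho a b) := by
  ext i j
  have him := i.isLt
  have hjm := j.isLt
  rw [Matrix.submatrix_apply, Jmat_mul_apply]
  have hri := rho_val a b i
  have hrj := rho_val a b j
  generalize hgi : rho a b i = gi
  generalize hgj : rho a b j = gj
  rw [hgi] at hri
  rw [hgj] at hrj
  unfold psiBig bd
  simp only [Matrix.of_apply, Fin.val_mk]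
  rcases Nat.lt_or_ge i.val b with hi1 | hi1
  · -- i in left B block
    rw [if_pos hi1] at hri
    rw [dif_neg (show ¬(b ≤ 2 * (a + b) - 1 - i.val ∧ 2 * (a + b) - 1 - i.val < b + 2 * a) by omega),
      dif_neg (show ¬(gi.val < 2 * a) by omega)]
    rcases Nat.lt_or_ge j.val b with hj1 | hj1
    · -- j left B
      rw [if_pos hj1] at hrj
      rw [dif_neg (show ¬(b ≤ (j : ℕ) ∧ (j : ℕ) < b + 2 * a) by omega),
        dif_neg (show ¬(gj.val < 2 * a) by omega), Jmat_mul_apply]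
      simp only [Fin.val_mk]
      have hexp : min i.val (2 * (a + b) - 1 - i.val)
          = min (gi.val - 2 * a) (2 * b - 1 - (gi.val - 2 * a)) := by omega
      rw [hexp]
      congr 1
      congr 1 <;> apply Fin.ext <;> simp only [Fin.val_mk] <;> split_ifs <;> omega
    · rcases Nat.lt_or_ge j.val (2 * a + b) with hj2 | hj2
      · -- j middle
        rw [if_neg (by omega), if_pos hj2] at hrj
        rw [dif_pos (show b ≤ (j : ℕ) ∧ (j : ℕ) < b + 2 * a by omega),
          dif_pos (show gj.val < 2 * a by omega), mul_zero]
      · -- j right B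
        rw [if_neg (by omega), if_neg (by omega)] at hrj
        rw [dif_neg (show ¬(b ≤ (j : ℕ) ∧ (j : ℕ) < b + 2 * a) by omega),
          dif_neg (show ¬(gj.val < 2 * a) by omega), Jmat_mul_apply]
        simp only [Fin.val_mk]
        have hexp : min i.val (2 * (a + b) - 1 - i.val)
            = min (gi.val - 2 * a) (2 * b - 1 - (gi.val - 2 * a)) := by omega
        rw [hexp]
        congr 1
        congr 1 <;> apply Fin.ext <;> simp only [Fin.val_mk] <;> split_ifs <;> omega
  · rcases Nat.lt_or_ge i.val (2 * a + b) with hi2 | hi2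
    · -- i middle (A block)
      rw [if_neg (by omega), if_pos hi2] at hri
      rw [dif_pos (show b ≤ 2 * (a + b) - 1 - i.val ∧ 2 * (a + b) - 1 - i.val < b + 2 * a by omega),
        dif_pos (show gi.val < 2 * a by omega)]
      rcases Nat.lt_or_ge j.val b with hj1 | hj1
      · rw [if_pos hj1] at hrj
        rw [dif_neg (show ¬(b ≤ (j : ℕ) ∧ (j : ℕ) < b + 2 * a) by omega),
          dif_neg (show ¬(gj.val < 2 * a) by omega), mul_zero]
      · rcases Nat.lt_or_ge j.val (2 * a + b) with hj2 | hj2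
        · -- A entry
          rw [if_neg (by omega), if_pos hj2] at hrj
          rw [dif_pos (show b ≤ (j : ℕ) ∧ (j : ℕ) < b + 2 * a by omega),
            dif_pos (show gj.val < 2 * a by omega), Matrix.smul_apply,
            Jmat_mul_apply, smul_eq_mul]
          simp only [Fin.val_mk]
          rw [← mul_assoc]
          congr 1
          · rw [show min i.val (2 * (a + b) - 1 - i.val)
                = b + min gi.val (2 * a - 1 - gi.val) from by omega, pow_add]
            ring
          · congr 1 <;> exact Fin.ext (by simp only [Fin.val_mk]; omega)
        · rw [if_neg (by omega), if_neg (by omega)] at hrj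
          rw [dif_neg (show ¬(b ≤ (j : ℕ) ∧ (j : ℕ) < b + 2 * a) by omega),
            dif_neg (show ¬(gj.val < 2 * a) by omega), mul_zero]
    · -- i right B block
      rw [if_neg (by omega), if_neg (by omega)] at hri
      rw [dif_neg (show ¬(b ≤ 2 * (a + b) - 1 - i.val ∧ 2 * (a + b) - 1 - i.val < b + 2 * a) by omega),
        dif_neg (show ¬(gi.val < 2 * a) by omega)]
      rcases Nat.lt_or_ge j.val b with hj1 | hj1
      · rw [if_pos hj1] at hrj
        rw [dif_neg (show ¬(b ≤ (j : ℕ) ∧ (j : ℕ) < b + 2 * a) by omega),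
          dif_neg (show ¬(gj.val < 2 * a) by omega), Jmat_mul_apply]
        simp only [Fin.val_mk]
        have hexp : min i.val (2 * (a + b) - 1 - i.val)
            = min (gi.val - 2 * a) (2 * b - 1 - (gi.val - 2 * a)) := by omega
        rw [hexp]
        congr 1
        congr 1 <;> apply Fin.ext <;> simp only [Fin.val_mk] <;> split_ifs <;> omega
      · rcases Nat.lt_or_ge j.val (2 * a + b) with hj2 | hj2
        · rw [if_neg (by omega), if_pos hj2] at hrj
          rw [dif_pos (show b ≤ (j : ℕ) ∧ (j : ℕ) < b + 2 * a by omega),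
            dif_pos (show gj.val < 2 * a by omega), mul_zero]
        · rw [if_neg (by omega), if_neg (by omega)] at hrj
          rw [dif_neg (show ¬(b ≤ (j : ℕ) ∧ (j : ℕ) < b + 2 * a) by omega),
            dif_neg (show ¬(gj.val < 2 * a) by omega), Jmat_mul_apply]
          simp only [Fin.val_mk]
          have hexp : min i.val (2 * (a + b) - 1 - i.val)
              = min (gi.val - 2 * a) (2 * b - 1 - (gi.val - 2 * a)) := by omega
          rw [hexp]
          congr 1
          congr 1 <;> apply Fin.ext <;> simp only [Fin.val_mk] <;> split_ifs <;> omega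

end final
end PfProof


open PfProof

/-- For `X ∈ so(2m,F)` let `θ(X) = pf(J_{2m} X)`.  Then for the block embedding `ψ`,
`θ(ψ(A,B)) = (−1)^{ab} · θ(A) · θ(B)`. -/
theorem theta_psi {F : Type*} [Field F] (h2 : (2 : F) ≠ 0) (a b : ℕ)
    (A : Matrix (Fin (2 * a)) (Fin (2 * a)) F)
    (B : Matrix (Fin (2 * b)) (Fin (2 * b)) F)
    (hA : Aᵀ * Jmat F a + Jmat F a * A = 0)
    (hB : Bᵀ * Jmat F b + Jmat F b * B = 0) :
    pf (Jmat F (a + b) *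
        Matrix.reindex (finCongr (by ring)) (finCongr (by ring)) (psi a b A B))
      = (-1 : F) ^ (a * b) * pf (Jmat F a * A) * pf (Jmat F b * B) := by
  have hJA : ∀ i j, (Jmat F a * A) j i = - (Jmat F a * A) i j := by
    intro i j
    have h1 : (Aᵀ * Jmat F a) i j + (Jmat F a * A) i j = 0 := by
      have h0 := congrFun (congrFun hA i) j
      simpa [Matrix.add_apply] using h0
    have hsym : (Aᵀ * Jmat F a) i j = (Jmat F a * A) j i := by
      rw [Matrix.mul_apply, Matrix.mul_apply]
      refine Finset.sum_congr rfl fun k _ => ?_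
      rw [Matrix.transpose_apply, Jmat_symm]
      ring
    rw [hsym] at h1
    exact eq_neg_of_add_eq_zero_left h1
  have hJB : ∀ i j, (Jmat F b * B) j i = - (Jmat F b * B) i j := by
    intro i j
    have h1 : (Bᵀ * Jmat F b) i j + (Jmat F b * B) i j = 0 := by
      have h0 := congrFun (congrFun hB i) j
      simpa [Matrix.add_apply] using h0
    have hsym : (Bᵀ * Jmat F b) i j = (Jmat F b * B) j i := by
      rw [Matrix.mul_apply, Matrix.mul_apply]
      refine Finset.sum_congr rfl fun k _ => ?_
      rw [Matrix.transpose_apply, Jmat_symm]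
      ring
    rw [hsym] at h1
    exact eq_neg_of_add_eq_zero_left h1
  have hbdskew : ∀ x y, bd a b (((-1 : F) ^ b) • (Jmat F a * A)) (Jmat F b * B) y x
      = - bd a b (((-1 : F) ^ b) • (Jmat F a * A)) (Jmat F b * B) x y := by
    intro x y
    unfold bd
    simp only [Matrix.of_apply]
    by_cases hx : x.val < 2 * a <;> by_cases hy : y.val < 2 * a
    · rw [dif_pos hy, dif_pos hx, dif_pos hx, dif_pos hy, Matrix.smul_apply, Matrix.smul_apply,
        smul_eq_mul, smul_eq_mul, hJA]
      ring
    · rw [dif_neg hy, dif_pos hx, dif_pos hx, dif_neg hy, neg_zero]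
    · rw [dif_pos hy, dif_neg hx, dif_neg hx, dif_pos hy, neg_zero]
    · rw [dif_neg hy, dif_neg hx, dif_neg hx, dif_neg hy, hJB]
  rw [reindex_psi, key_eq, pf_submatrix _ hbdskew (rho a b), sign_rho, pf_bd, pf_smul]
  push_cast
  rw [← pow_mul, Nat.mul_comm b a]
  ring
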